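/- Let q > 2 be a prime power, K an algebraic closure of F_q, and t ∈ K with t^(q^2+q+1) = 1. Then the number of elements γ ∈ K satisfying both γ^(q^4+q^2+1) = 1 and 1 + t·γ^(q^3+1) + t^(q^2+1)·γ^(q^2-q+1) = 0 is exactly q^3 + 1. -/

import Mathlib

open Polynomial

theorem stmt_7 (F : Type*) [Field F] [Fintype F] (q : ℕ) (hq : Fintype.card F = q)
    (hq2 : 2 < q) (t : AlgebraicClosure F) (ht : t ^ (q^2 + q + 1) = 1) :
    Set.ncard {γ : AlgebraicClosure F | γ ^ (q^4 + q^2 + 1) = 1 ∧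
      1 + t * γ ^ (q^3 + 1) + t ^ (q^2 + 1) * γ ^ (q^2 - q + 1) = 0} = q^3 + 1 := by
  classical
  -- basic numeric facts
  have hqq2 : q ≤ q^2 := Nat.le_self_pow (by norm_num) q
  have hq23 : q^2 ≤ q^3 := Nat.pow_le_pow_right (by omega) (by norm_num)
  have hq34 : q^3 ≤ q^4 := Nat.pow_le_pow_right (by omega) (by norm_num)
  have hq23' : q^2 < q^3 := Nat.pow_lt_pow_right (by omega) (by norm_num)
  -- characteristic facts
  obtain ⟨p, hpI⟩ := CharP.exists F
  haveI := hpI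
  obtain ⟨n, hp, hcard⟩ := FiniteField.card F p
  haveI : CharP (AlgebraicClosure F) p :=
    charP_of_injective_algebraMap (algebraMap F (AlgebraicClosure F)).injective p
  haveI : Fact p.Prime := ⟨hp⟩
  rw [hq] at hcard
  have hqK : (q : AlgebraicClosure F) = 0 := by
    rw [hcard]
    push_cast
    rw [CharP.cast_eq_zero (AlgebraicClosure F) p]
    exact zero_pow (by exact_mod_cast n.2.ne')
  have hfrob : ∀ x y : AlgebraicClosure F, (x + y)^q = x^q + y^q := by
    intro x y
    rw [hcard]
    exact add_pow_char_pow x y p (n : ℕ)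
  have ht0 : t ≠ 0 := by
    intro h
    rw [h, zero_pow (by omega : q^2 + q + 1 ≠ 0)] at ht
    exact zero_ne_one ht
  -- key: any solution of the equation is a (q^4+q^2+1)-th root of unity
  have hroot : ∀ γ : AlgebraicClosure F,
      1 + t * γ ^ (q^3+1) + t^(q^2+1) * γ^(q^2-q+1) = 0 →
      γ ^ (q^4+q^2+1) = 1 := by
    intro γ hγ
    have hγ0 : γ ≠ 0 := by
      intro h
      rw [h, zero_pow (by omega : q^3 + 1 ≠ 0),
        zero_pow (by omega : q^2 - q + 1 ≠ 0)] at hγ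
      simp at hγ
    set a := γ^(q^2-q+1) with ha
    set b := γ^(q^3-q^2+q) with hb
    set c := γ^(q^4-q^3+q^2) with hc
    set s := t^q with hs
    set r := t^(q^2) with hr
    have hsne : s ≠ 0 := pow_ne_zero _ ht0
    have hab : γ^(q^3+1) = a * b := by rw [ha, hb, ← pow_add]; congr 1; omega
    have hbc : γ^(q^4+q) = b * c := by rw [hb, hc, ← pow_add]; congr 1; omega
    have habc : γ^(q^4+q^2+1) = a * b * c := by
      rw [ha, hb, hc, ← pow_add, ← pow_add]; congr 1; omega
    have hts3 : t^(q^3) = t := by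
      have he : (q^2+q+1)*(q-1)+1 = q^3 := by
        obtain ⟨m, rfl⟩ : ∃ m, q = m+3 := ⟨q-3, by omega⟩
        have h1 : m+3-1 = m+2 := by omega
        rw [h1]; ring
      calc t^(q^3) = (t^(q^2+q+1))^(q-1) * t := by rw [← pow_mul, ← pow_succ, he]
      _ = t := by rw [ht, one_pow, one_mul]
    have htr1 : t^(q^2+1) = t * r := by rw [hr, pow_succ]; ring
    have h0 : t*(a*b) + t*r*a + 1 = 0 := by
      rw [← hab, ← htr1]; linear_combination hγ
    -- Frobenius-power of the equation
    have key_exp : (q^2 - q + 1) * q = q^3 - q^2 + q := by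
      have h1 : (q^2 - q + 1) * q = (q^2 - q) * q + q := by ring
      have h2 : (q^2 - q) * q + q * q = q^2 * q := by
        rw [← add_mul, Nat.sub_add_cancel hqq2]
      have h3 : q^2 * q = q^3 := by ring
      have h4 : q * q = q^2 := by ring
      omega
    have hE1 : 1 + s * γ^(q^4+q) + (t*s) * γ^(q^3-q^2+q) = 0 := by
      have h : (1 + t * γ ^ (q^3+1) + t^(q^2+1) * γ^(q^2-q+1))^q = 0^q := by rw [hγ]
      rw [hfrob, hfrob, one_pow, mul_pow, mul_pow, ← pow_mul, ← pow_mul, ← pow_mul,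
        zero_pow (by omega : q ≠ 0)] at h
      rw [show (q^3+1)*q = q^4+q by ring, key_exp,
        show (q^2+1)*q = q^3+q by ring] at h
      have hts : t^(q^3+q) = t * s := by rw [pow_add, hts3, hs]
      rw [hts, ← hs] at h
      exact h
    have h1 : s*(b*c) + t*s*b + 1 = 0 := by
      rw [← hbc]; linear_combination hE1
    have htsr : t*s*r = 1 := by
      rw [hs, hr, ← ht]; ring
    have key : a*b*c = 1 := by
      apply mul_left_cancel₀ hsne
      rw [mul_one]
      linear_combination a*h1 - s*h0 + a*htsr
    rw [habc, key]
  -- the polynomial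
  set G : (AlgebraicClosure F)[X] :=
    C t * X^(q^3+1) + C (t^(q^2+1)) * X^(q^2-q+1) + 1 with hGdef
  have hdegG : G.natDegree = q^3+1 := by
    have d1 : (C t * X^(q^3+1)).natDegree = q^3+1 :=
      natDegree_C_mul_X_pow _ _ ht0
    have d2 : (C (t^(q^2+1)) * X^(q^2-q+1)).natDegree = q^2-q+1 :=
      natDegree_C_mul_X_pow _ _ (pow_ne_zero _ ht0)
    have d3 : (C (t^(q^2+1)) * X^(q^2-q+1) + 1).natDegree ≤ q^2-q+1 := by
      refine le_trans (natDegree_add_le _ _) ?_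
      rw [d2, natDegree_one]
      omega
    rw [hGdef, add_assoc, natDegree_add_eq_left_of_natDegree_lt, d1]
    rw [d1]
    omega
  have hGne : G ≠ 0 := by
    intro h
    rw [h, natDegree_zero] at hdegG
    omega
  have hderiv : derivative G = C t * X^(q^3) + C (t^(q^2+1)) * X^(q^2-q) := by
    have hc1 : ((q^3+1 : ℕ) : AlgebraicClosure F) = 1 := by
      push_cast [hqK]; ring
    have hc2 : ((q^2-q+1 : ℕ) : AlgebraicClosure F) = 1 := by
      push_cast [hqq2, hqK]; ring
    rw [hGdef]
    rw [derivative_add, derivative_add, derivative_one, derivative_C_mul,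
      derivative_C_mul, derivative_X_pow, derivative_X_pow, hc1, hc2]
    rw [show q^3+1-1 = q^3 by omega, show q^2-q+1-1 = q^2-q by omega]
    simp only [map_one, one_mul, mul_one]
    ring
  have hsep : G.Separable := by
    refine ⟨1, -X, ?_⟩
    rw [hderiv, hGdef]
    ring
  have hcardroot := Polynomial.card_rootSet_eq_natDegree hsep
    (IsAlgClosed.splits (G.map (algebraMap (AlgebraicClosure F) (AlgebraicClosure F))))
  have hseteq : {γ : AlgebraicClosure F | γ ^ (q^4 + q^2 + 1) = 1 ∧
      1 + t * γ ^ (q^3 + 1) + t ^ (q^2 + 1) * γ ^ (q^2 - q + 1) = 0}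
      = G.rootSet (AlgebraicClosure F) := by
    ext γ
    rw [Set.mem_setOf_eq, Polynomial.mem_rootSet]
    have hev : aeval γ G = t * γ ^ (q^3+1) + t^(q^2+1) * γ^(q^2-q+1) + 1 := by
      rw [hGdef]
      simp [map_add, map_mul, map_pow, map_one, aeval_C, aeval_X]
    constructor
    · rintro ⟨-, h2⟩
      refine ⟨hGne, ?_⟩
      rw [hev]; linear_combination h2
    · rintro ⟨-, h⟩
      rw [hev] at h
      exact ⟨hroot γ (by linear_combination h), by linear_combination h⟩
  rw [hseteq, ← Nat.card_coe_set_eq, Nat.card_eq_fintype_card, hcardroot, hdegG]
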